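/- Let λ = 1/2 and P ∈ ℝ, let I be an open interval, and let ψ : I → ℝ be a strictly positive classical solution of the homogeneous Euler ODE with parameters (1/2, P) such that ψ′(c) = 0 for some c ∈ I. Then, with γ₁ = −4P and γ₂ = ψ(c)² + 4P, one has ψ(θ)² = γ₁ + γ₂ cos(θ − c) for all θ ∈ I, i.e. ψ(θ) = √(γ₁ + γ₂ cos(θ − c)). -/

import Mathlib

open Real Set

/-- For `λ = 1/2`, every strictly positive classical solution of the homogeneous
Euler ODE on an open interval `I` with a critical point `c ∈ I` satisfies
`ψ(θ)² = γ₁ + γ₂ cos(θ - c)` with `γ₁ = -4P` and `γ₂ = ψ(c)² + 4P`, i.e.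
`ψ(θ) = √(γ₁ + γ₂ cos(θ - c))`. -/
theorem lambda_half_classification
    (P : ℝ) (I : Set ℝ) (hIopen : IsOpen I) (hIconn : IsPreconnected I)
    (ψ ψ' ψ'' : ℝ → ℝ)
    (hpos : ∀ θ ∈ I, 0 < ψ θ)
    (hd1 : ∀ θ ∈ I, HasDerivAt ψ (ψ' θ) θ)
    (hd2 : ∀ θ ∈ I, HasDerivAt ψ' (ψ'' θ) θ)
    (hode : ∀ θ ∈ I, 2 * ((1/2 : ℝ) - 1) * P =
      -((1/2 : ℝ) - 1) * (ψ' θ) ^ 2 + (1/2 : ℝ) ^ 2 * (ψ θ) ^ 2 + (1/2 : ℝ) * (ψ'' θ) * (ψ θ))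
    (c : ℝ) (hc : c ∈ I) (hc' : ψ' c = 0) :
    ∀ θ ∈ I, ψ θ ^ 2 = (-4 * P) + (ψ c ^ 2 + 4 * P) * Real.cos (θ - c) ∧
      ψ θ = Real.sqrt ((-4 * P) + (ψ c ^ 2 + 4 * P) * Real.cos (θ - c)) := by
  set γ₂ : ℝ := ψ c ^ 2 + 4 * P with hγ₂
  -- F = ψ² - (-4P + γ₂ cos(θ-c)), F' its derivative, E = F'² + F²
  set F : ℝ → ℝ := fun θ => ψ θ ^ 2 - ((-4 * P) + γ₂ * Real.cos (θ - c)) with hF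
  set F' : ℝ → ℝ := fun θ => 2 * ψ θ * ψ' θ + γ₂ * Real.sin (θ - c) with hF'
  set E : ℝ → ℝ := fun θ => F' θ ^ 2 + F θ ^ 2 with hE
  have hdF : ∀ θ ∈ I, HasDerivAt F (F' θ) θ := by
    intro θ hθ
    have h1 : HasDerivAt (fun θ => ψ θ ^ 2) (2 * ψ θ * ψ' θ) θ := by
      have := (hd1 θ hθ).pow 2
      simpa [Pi.pow_def, mul_comm, mul_assoc, mul_left_comm] using this
    have h2 : HasDerivAt (fun θ => (-4 * P) + γ₂ * Real.cos (θ - c))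
        (γ₂ * (-Real.sin (θ - c))) θ := by
      have hcos : HasDerivAt (fun θ : ℝ => Real.cos (θ - c)) (-Real.sin (θ - c)) θ := by
        have := (Real.hasDerivAt_cos (θ - c)).comp θ ((hasDerivAt_id θ).sub_const c)
        simpa [Function.comp_def] using this
      simpa using (hcos.const_mul γ₂).const_add (-4 * P)
    have := h1.sub h2
    simpa [Pi.add_def, Pi.neg_def, hF, hF', mul_comm, mul_assoc, mul_left_comm, sub_eq_add_neg] using this
  have hdF' : ∀ θ ∈ I, HasDerivAt F' (-F θ) θ := by
    intro θ hθ
    have h1 : HasDerivAt (fun θ => 2 * ψ θ * ψ' θ)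
        (2 * ψ' θ * ψ' θ + 2 * ψ θ * ψ'' θ) θ := by
      have := ((hd1 θ hθ).const_mul 2).mul (hd2 θ hθ)
      simpa [Pi.mul_def, mul_comm, mul_assoc, mul_left_comm, add_comm] using this
    have h2 : HasDerivAt (fun θ => γ₂ * Real.sin (θ - c)) (γ₂ * Real.cos (θ - c)) θ := by
      have hsin : HasDerivAt (fun θ : ℝ => Real.sin (θ - c)) (Real.cos (θ - c)) θ := by
        have := (Real.hasDerivAt_sin (θ - c)).comp θ ((hasDerivAt_id θ).sub_const c)
        simpa [Function.comp_def] using this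
      simpa using hsin.const_mul γ₂
    have hode' := hode θ hθ
    have key : 2 * ψ' θ * ψ' θ + 2 * ψ θ * ψ'' θ + γ₂ * Real.cos (θ - c) = -F θ := by
      simp only [hF]
      nlinarith [hode']
    have := h1.add h2
    rw [key] at this
    simpa [Pi.add_def, hF'] using this
  have hdE : ∀ θ ∈ I, HasDerivAt E 0 θ := by
    intro θ hθ
    have h1 : HasDerivAt E (-(2 * F' θ * F θ) + 2 * F θ * F' θ) θ := by
      simpa [Pi.add_def, Pi.pow_def, hE, mul_comm, mul_assoc, mul_left_comm] using
        ((hdF' θ hθ).pow 2).add ((hdF θ hθ).pow 2)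
    have h0 : -(2 * F' θ * F θ) + 2 * F θ * F' θ = 0 := by ring
    rwa [h0] at h1
  have hconv : Convex ℝ I := hIconn.ordConnected.convex
  have hEconst : ∀ θ ∈ I, E θ = E c := by
    intro θ hθ
    have := hconv.norm_image_sub_le_of_norm_hasDerivWithin_le
      (f := E) (f' := fun _ => (0 : ℝ)) (C := 0)
      (fun x hx => (hdE x hx).hasDerivWithinAt) (fun x _ => by simp) hc hθ
    have h2 : |E θ - E c| ≤ 0 := by simpa using this
    have := abs_eq_zero.mp (le_antisymm h2 (abs_nonneg _))
    linarith
  have hEc : E c = 0 := by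
    simp [hE, hF, hF', hc', hγ₂]
  have hFzero : ∀ θ ∈ I, F θ = 0 := by
    intro θ hθ
    have h := hEconst θ hθ
    rw [hEc] at h
    simp only [hE] at h
    have h2 : F θ ^ 2 = 0 := by nlinarith [sq_nonneg (F' θ), sq_nonneg (F θ)]
    exact pow_eq_zero_iff (two_ne_zero) |>.mp h2
  intro θ hθ
  have h1 : ψ θ ^ 2 = (-4 * P) + γ₂ * Real.cos (θ - c) := by
    have := hFzero θ hθ
    simp only [hF] at this
    linarith
  refine ⟨h1, ?_⟩
  rw [← h1, Real.sqrt_sq (hpos θ hθ).le]
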